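/- Let p be an odd prime and let λ be a strict partition with m parts a_1 > a_2 > … > a_m such that a_i = p for some index i. Let μ be the strict partition whose parts are those of λ with the part p removed (a p-bar removal of type 2). Then h̄_{λ,p'} ≡ (−1)^{p−m+i} · h̄_{μ,p'} (mod p). -/

import Mathlib

/-- The multiset of bar lengths of a strict partition, given by its set of parts `X`:
for each part `a`, the row contributes `({1, …, a} ∪ {a + b : b ∈ X, b < a}) \ {a - b : b ∈ X, b < a}`. -/
def barLengths (X : Finset ℕ) : Multiset ℕ :=
  X.val.bind fun a =>
    (((Finset.Icc 1 a) ∪ (X.filter (· < a)).image (fun b => a + b)) \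
      ((X.filter (· < a)).image (fun b => a - b))).val

/-- The product of all bar lengths of the strict partition with parts `X`
that are not divisible by `p`. -/
def barProd' (p : ℕ) (X : Finset ℕ) : ℕ :=
  (Multiset.filter (fun l => ¬ p ∣ l) (barLengths X)).prod

namespace BarAux

/-- The row of bar lengths of a part `a`. -/
def row (X : Finset ℕ) (a : ℕ) : Finset ℕ :=
  ((Finset.Icc 1 a) ∪ (X.filter (· < a)).image (fun b => a + b)) \
    ((X.filter (· < a)).image (fun b => a - b))

lemma filter_bind (s : Multiset ℕ) (f : ℕ → Multiset ℕ) (q : ℕ → Prop) [DecidablePred q] :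
    (s.bind f).filter q = s.bind (fun a => (f a).filter q) := by
  induction s using Multiset.induction with
  | empty => simp
  | cons a s ih => simp [Multiset.filter_add, ih]

/-- The p'-product of the row of `a`. -/
def g (p : ℕ) (X : Finset ℕ) (a : ℕ) : ℕ :=
  ∏ l ∈ (row X a).filter (fun l => ¬ p ∣ l), l

lemma barProd'_eq (p : ℕ) (X : Finset ℕ) :
    barProd' p X = ∏ a ∈ X, g p X a := by
  unfold barProd' barLengths
  rw [filter_bind, Multiset.prod_bind]
  rw [Finset.prod_eq_multiset_prod]
  congr 1
  apply Multiset.map_congr rfl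
  intro a _
  rw [g, Finset.prod_eq_multiset_prod, Multiset.map_id', Finset.filter_val]
  rfl

end BarAux

open BarAux Finset

/-- Removal of the `p`-bar of type 2.  Here `m = X.card` is the number of parts, and
`i = (X.filter (p < ·)).card + 1` is the index of the part `p` when the parts are
listed in decreasing order `a₁ > a₂ > … > a_m`.  The exponent `p - m + i` is taken
in `ℤ` and the sign `(-1)^(p - m + i)` is computed in `ℤˣ`. -/
theorem stmt2 (p : ℕ) (hp : p.Prime) (hodd : Odd p)
    (X : Finset ℕ) (hX : 0 ∉ X) (hpX : p ∈ X) :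
    (barProd' p X : ℤ) ≡
      (((-1 : ℤˣ) ^ ((p : ℤ) - (X.card : ℤ) + (((X.filter fun b => p < b).card : ℤ) + 1)) : ℤˣ) : ℤ)
        * (barProd' p (X.erase p) : ℤ) [ZMOD p] := by
  haveI : Fact p.Prime := ⟨hp⟩
  have hp1 : 1 < p := hp.one_lt
  set X' := X.erase p with hX'
  set S := X.filter (· < p) with hS
  set k := S.card with hk
  -- basic facts about S
  have hSmem : ∀ b ∈ S, 1 ≤ b ∧ b < p := by
    intro b hb
    rw [hS, Finset.mem_filter] at hb
    refine ⟨?_, hb.2⟩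
    rcases Nat.pos_of_ne_zero (fun h => hX (h ▸ hb.1)) with h
    exact h
  -- S is also X'.filter (· < p)
  have hS' : X'.filter (· < p) = S := by
    rw [hX', Finset.filter_erase, ← hS]
    exact Finset.erase_eq_of_notMem (by simp [hS])
  -- cardinality: X.card = k + k' + 1
  set k' := (X.filter fun b => p < b).card with hk'
  have hcard : X.card = k + (k' + 1) := by
    have h1 : (X.filter (fun b => b < p)).card + (X.filter (fun b => ¬ b < p)).card = X.card :=
      Finset.card_filter_add_card_filter_not _
    have h2 : X.filter (fun b => ¬ b < p) = insert p (X.filter (fun b => p < b)) := by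
      ext b
      simp only [Finset.mem_filter, Finset.mem_insert]
      constructor
      · rintro ⟨hb, hnb⟩
        rcases Nat.lt_or_ge p b with h | h
        · exact Or.inr ⟨hb, h⟩
        · left; omega
      · rintro (rfl | ⟨hb, hpb⟩)
        · exact ⟨hpX, by omega⟩
        · exact ⟨hb, by omega⟩
    have h3 : p ∉ X.filter (fun b => p < b) := by simp
    rw [h2, Finset.card_insert_of_notMem h3] at h1
    rw [← h1, hk, hS, hk']
  have hkp : k ≤ p - 1 := by
    have : S ⊆ Finset.Icc 1 (p - 1) := by
      intro b hb
      rcases hSmem b hb with ⟨h1, h2⟩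
      simp only [Finset.mem_Icc]
      omega
    calc k ≤ (Finset.Icc 1 (p-1)).card := Finset.card_le_card this
    _ = p - 1 := by rw [Nat.card_Icc]; omega
  -- per-row comparison for a ≠ p
  have hrow_lt : ∀ a, a < p → row X a = row X' a := by
    intro a ha
    unfold row
    have : X'.filter (· < a) = X.filter (· < a) := by
      rw [hX', Finset.filter_erase]
      exact Finset.erase_eq_of_notMem (by simp; omega)
    rw [this]
  have hrow_gt : ∀ a, p < a → row X a = (insert (a + p) (row X' a)).erase (a - p) := by
    intro a ha
    have hfil : X.filter (· < a) = insert p (X'.filter (· < a)) := by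
      conv_lhs => rw [← Finset.insert_erase hpX]
      rw [Finset.filter_insert, if_pos ha, hX']
    have hnmem : a + p ∉ (X'.filter (· < a)).image (fun b => a - b) := by
      simp only [Finset.mem_image, Finset.mem_filter, not_exists]
      rintro b ⟨⟨_, hb⟩, hab⟩
      omega
    unfold row
    rw [hfil, Finset.image_insert, Finset.image_insert, Finset.union_insert,
      Finset.sdiff_insert, Finset.insert_sdiff_of_notMem _ hnmem]
  -- membership facts for a > p
  have hmem_sub : ∀ a, p < a → a ∈ X → a - p ∈ row X' a := by
    intro a ha haX
    unfold row
    rw [Finset.mem_sdiff]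
    constructor
    · apply Finset.mem_union_left
      simp only [Finset.mem_Icc]; omega
    · simp only [Finset.mem_image, Finset.mem_filter, not_exists]
      rintro b ⟨⟨hbX', hb⟩, hab⟩
      have : b = p := by omega
      exact (Finset.ne_of_mem_erase (this ▸ hbX')) rfl
  have hnmem_add : ∀ a, p < a → a + p ∉ row X' a := by
    intro a ha h
    unfold row at h
    rw [Finset.mem_sdiff, Finset.mem_union] at h
    rcases h.1 with h1 | h1
    · simp only [Finset.mem_Icc] at h1; omega
    · simp only [Finset.mem_image, Finset.mem_filter] at h1
      rcases h1 with ⟨b, ⟨hbX', hb⟩, hab⟩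
      have : b = p := by omega
      exact (Finset.ne_of_mem_erase (this ▸ hbX')) rfl
  -- per-row congruence
  have hg : ∀ a ∈ X', ((g p X a : ZMod p)) = ((g p X' a : ZMod p)) := by
    intro a haX'
    have haX : a ∈ X := Finset.mem_of_mem_erase haX'
    have hanep : a ≠ p := Finset.ne_of_mem_erase haX'
    rcases Nat.lt_or_ge a p with hlt | hge
    · rw [g, g, hrow_lt a hlt]
    have hgt : p < a := by omega
    rw [g, g, hrow_gt a hgt, Finset.filter_erase, Finset.filter_insert]
    by_cases hpa : p ∣ a
    · rw [if_neg (by simp [Nat.dvd_add_right hpa]),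
        Finset.erase_eq_of_notMem (by
          simp only [Finset.mem_filter, not_and, not_not]
          intro _
          exact (Nat.dvd_sub hpa dvd_rfl))]
    · have hFadd : ¬ p ∣ a + p := by
        intro h
        exact hpa ((Nat.dvd_add_right (dvd_refl p)).mp (by rwa [Nat.add_comm] at h))
      have hFsub : ¬ p ∣ a - p := by
        intro h
        apply hpa
        have : a = (a - p) + p := by omega
        rw [this]
        exact Nat.dvd_add h dvd_rfl
      rw [if_pos hFadd, Finset.erase_insert_of_ne (by omega)]
      have hsub_mem : a - p ∈ (row X' a).filter (fun l => ¬ p ∣ l) :=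
        Finset.mem_filter.mpr ⟨hmem_sub a hgt haX, hFsub⟩
      have hadd_nmem : a + p ∉ ((row X' a).filter (fun l => ¬ p ∣ l)).erase (a - p) := by
        intro h
        exact hnmem_add a hgt (Finset.mem_filter.mp (Finset.mem_of_mem_erase h)).1
      rw [Finset.prod_insert hadd_nmem]
      rw [← Finset.mul_prod_erase _ _ hsub_mem]
      push_cast
      have h2 : ((a - p : ℕ) : ZMod p) = (a : ZMod p) := by
        rw [Nat.cast_sub (le_of_lt hgt), ZMod.natCast_self, sub_zero]
      rw [h2, ZMod.natCast_self, add_zero]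
  -- the row of p
  have hgp : ((g p X p : ZMod p)) = (-1) ^ (k + 1) := by
    have hSfil : X.filter (· < p) = S := hS.symm
    set A := S.image (fun b => p + b) with hA
    set B := S.image (fun b => p - b) with hB
    have hrowp : row X p = (Finset.Icc 1 p ∪ A) \ B := by
      unfold row; rw [hSfil]
    -- B ⊆ Icc 1 (p-1), all elements of B satisfy F, etc.
    have hBsub : B ⊆ Finset.Icc 1 (p - 1) := by
      intro l hl
      rw [hB, Finset.mem_image] at hl
      rcases hl with ⟨b, hb, rfl⟩
      rcases hSmem b hb with ⟨h1, h2⟩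
      simp only [Finset.mem_Icc]; omega
    have hBF : ∀ l ∈ B, ¬ p ∣ l := by
      intro l hl hdvd
      rcases Finset.mem_Icc.mp (hBsub hl) with ⟨h1, h2⟩
      have := Nat.le_of_dvd (by omega) hdvd
      omega
    have hAF : ∀ l ∈ A, ¬ p ∣ l := by
      intro l hl hdvd
      rw [hA, Finset.mem_image] at hl
      rcases hl with ⟨b, hb, rfl⟩
      rcases hSmem b hb with ⟨h1, h2⟩
      have : p ∣ b := (Nat.dvd_add_right dvd_rfl).mp hdvd
      have := Nat.le_of_dvd (by omega) this
      omega
    -- the filtered row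
    have hIccF : (Finset.Icc 1 p).filter (fun l => ¬ p ∣ l) = Finset.Icc 1 (p - 1) := by
      ext l
      simp only [Finset.mem_filter, Finset.mem_Icc]
      constructor
      · rintro ⟨⟨h1, h2⟩, h3⟩
        refine ⟨h1, ?_⟩
        by_contra hcon
        have hlp : l = p := by omega
        exact h3 (hlp ▸ dvd_rfl)
      · rintro ⟨h1, h2⟩
        refine ⟨⟨h1, by omega⟩, ?_⟩
        intro hdvd
        have := Nat.le_of_dvd (by omega) hdvd
        omega
    have hdisj : Disjoint (Finset.Icc 1 (p-1)) A := by
      rw [Finset.disjoint_left]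
      intro l hl hlA
      rw [hA, Finset.mem_image] at hlA
      rcases hlA with ⟨b, hb, rfl⟩
      rcases Finset.mem_Icc.mp hl with ⟨_, h2⟩
      omega
    have hfilrow : (row X p).filter (fun l => ¬ p ∣ l)
        = (Finset.Icc 1 (p-1) \ B) ∪ A := by
      rw [hrowp]
      ext l
      simp only [Finset.mem_filter, Finset.mem_sdiff, Finset.mem_union]
      constructor
      · rintro ⟨⟨h1 | h1, h2⟩, h3⟩
        · left
          refine ⟨?_, h2⟩
          rw [← hIccF, Finset.mem_filter]; exact ⟨h1, h3⟩
        · right; exact h1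
      · rintro (⟨h1, h2⟩ | h1)
        · have := Finset.mem_filter.mp (hIccF ▸ h1 : l ∈ (Finset.Icc 1 p).filter (fun l => ¬ p ∣ l))
          exact ⟨⟨Or.inl this.1, h2⟩, this.2⟩
        · exact ⟨⟨Or.inr h1, fun h => (Finset.disjoint_right.mp hdisj h1) (hBsub h)⟩, hAF l h1⟩
    -- products
    have hinjadd : Set.InjOn (fun b => p + b) S := by
      intro x _ y _ h
      simp only at h
      omega
    have hinjsub : Set.InjOn (fun b => p - b) S := by
      intro x hx y hy h
      have h1 := hSmem x hx
      have h2 := hSmem y hy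
      simp only at h
      omega
    have hdisj2 : Disjoint (Finset.Icc 1 (p-1) \ B) A :=
      Finset.disjoint_of_subset_left (Finset.sdiff_subset) hdisj
    have hP : (∏ b ∈ S, (b : ZMod p)) ≠ 0 := by
      rw [Finset.prod_ne_zero_iff]
      intro b hb hb0
      rcases hSmem b hb with ⟨h1, h2⟩
      rw [ZMod.natCast_eq_zero_iff] at hb0
      have := Nat.le_of_dvd (by omega) hb0
      omega
    -- product over B
    have hprodB : (∏ l ∈ B, (l : ZMod p)) = (-1) ^ k * ∏ b ∈ S, (b : ZMod p) := by
      rw [hB, Finset.prod_image hinjsub]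
      have hcong : ∀ b ∈ S, ((p - b : ℕ) : ZMod p) = (-1) * (b : ZMod p) := by
        intro b hb
        rcases hSmem b hb with ⟨_, h2⟩
        rw [Nat.cast_sub (le_of_lt h2), ZMod.natCast_self]
        ring
      rw [Finset.prod_congr rfl hcong, Finset.prod_mul_distrib, Finset.prod_const, hk]
    have hprodA : (∏ l ∈ A, (l : ZMod p)) = ∏ b ∈ S, (b : ZMod p) := by
      rw [hA, Finset.prod_image hinjadd]
      apply Finset.prod_congr rfl
      intro b _
      push_cast
      simp
    have hprodIcc : (∏ l ∈ Finset.Icc 1 (p-1), (l : ZMod p)) = -1 := by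
      have h0 : (∏ l ∈ Finset.Icc 1 (p-1), l) = Nat.factorial (p-1) := by
        rw [← Finset.Ico_add_one_right_eq_Icc, Finset.prod_Ico_id_eq_factorial]
      have h1 : (∏ l ∈ Finset.Icc 1 (p-1), (l : ZMod p))
          = ((∏ l ∈ Finset.Icc 1 (p-1), l : ℕ) : ZMod p) := by push_cast; rfl
      rw [h1, h0]
      exact ZMod.wilsons_lemma p
    have hBsubIcc : B ⊆ Finset.Icc 1 (p-1) := hBsub
    have hsdiff : (∏ l ∈ Finset.Icc 1 (p-1) \ B, (l : ZMod p)) * ∏ l ∈ B, (l : ZMod p)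
        = ∏ l ∈ Finset.Icc 1 (p-1), (l : ZMod p) := Finset.prod_sdiff hBsubIcc
    have hgp1 : ((g p X p : ZMod p)) = (∏ l ∈ Finset.Icc 1 (p-1) \ B, (l : ZMod p)) *
        ∏ l ∈ A, (l : ZMod p) := by
      rw [g]
      push_cast
      rw [hfilrow, Finset.prod_union hdisj2]
    -- combine
    set D := ∏ l ∈ Finset.Icc 1 (p-1) \ B, (l : ZMod p) with hD
    set P := ∏ b ∈ S, (b : ZMod p) with hPdef
    have key : D * ((-1) ^ k * P) = -1 := by
      rw [← hprodB, hsdiff, hprodIcc]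
    have hgD : ((g p X p : ZMod p)) = D * P := by rw [hgp1, hprodA]
    have hne : ((-1 : ZMod p)) ^ k ≠ 0 := by
      apply pow_ne_zero
      intro h
      have : (1 : ZMod p) = 0 := by rw [← neg_neg (1 : ZMod p), h, neg_zero]
      exact one_ne_zero this
    -- D * P = (-1)^(k+1)
    have h11 : ((-1 : ZMod p) ^ k) * ((-1) ^ k) = 1 := by
      rw [← pow_add]
      exact Even.neg_one_pow ⟨k, rfl⟩
    have : (D * P) * ((-1 : ZMod p) ^ k) = (-1) ^ (k + 1) * (-1) ^ k := by
      rw [pow_succ]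
      linear_combination key + h11
    have := mul_right_cancel₀ hne this
    rw [hgD, this]
  -- assemble
  have hmain : ((barProd' p X : ZMod p)) = (-1) ^ (k + 1) * ((barProd' p X' : ZMod p)) := by
    rw [barProd'_eq, barProd'_eq]
    push_cast
    rw [← Finset.mul_prod_erase X _ hpX, hgp, ← hX']
    congr 1
    exact Finset.prod_congr rfl hg
  -- the sign
  have hz : ((p : ℤ) - (X.card : ℤ) + (((X.filter fun b => p < b).card : ℤ) + 1))
      = ((p - k : ℕ) : ℤ) := by
    rw [← hk', hcard]
    push_cast
    omega
  rw [← ZMod.intCast_eq_intCast_iff]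
  push_cast
  rw [hz, zpow_natCast, Units.val_pow_eq_pow_val]
  push_cast
  rw [hmain]
  congr 1
  rw [neg_one_pow_eq_pow_mod_two (n := k + 1), neg_one_pow_eq_pow_mod_two (n := p - k)]
  congr 1
  rcases hodd with ⟨t, ht⟩
  omega
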